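/- Let n > m > 0 be coprime integers with euclidean quotients k_1, ..., k_r. Then n + (m - 1) + sum_{j=1}^{r} k_j * l_j * (l_j - 1)/2 = (n*m + m + n - 1)/2, where (l_j) is the euclidean sequence of (m,n). -/

import Mathlib

/-- The euclidean sequence of remainders of the pair (m,n): `eucl m n 0 = n`,
`eucl m n 1 = m`, `eucl m n (j+2) = eucl m n j % eucl m n (j+1)`. -/
def eucl (m n : ℕ) : ℕ → ℕ
  | 0 => n
  | 1 => m
  | j+2 => eucl m n j % eucl m n (j+1)

lemma eucl_shift (m n : ℕ) : ∀ j, eucl (n % m) m j = eucl m n (j + 1)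
  | 0 => rfl
  | 1 => rfl
  | (j+2) => by
      show eucl (n % m) m j % eucl (n % m) m (j+1)
          = eucl m n (j+1) % eucl m n (j+2)
      rw [eucl_shift m n j, eucl_shift m n (j+1)]

lemma eucl_one (n : ℕ) : ∀ j, eucl 1 n (j + 1) = 0 ∨ eucl 1 n (j + 1) = 1
  | 0 => Or.inr rfl
  | 1 => Or.inl (Nat.mod_one n)
  | (j+2) => by
      have h1 := eucl_one n j
      have h2 := eucl_one n (j+1)
      show eucl 1 n (j+1) % eucl 1 n (j+2) = 0 ∨ eucl 1 n (j+1) % eucl 1 n (j+2) = 1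
      rcases h1 with h1 | h1 <;> rcases h2 with h2 | h2 <;> rw [h1, h2] <;> simp

lemma key (m : ℕ) : ∀ n r, 0 < m → Nat.Coprime m n → m ≤ n → eucl m n (r + 1) = 0 →
    (∑ j ∈ Finset.Icc 1 r,
        ((eucl m n (j - 1) / eucl m n j : ℕ) : ℚ) * (eucl m n j : ℚ)
          * ((eucl m n j : ℚ) - 1))
      = (n : ℚ) * m - n - m + 1 := by
  induction m using Nat.strong_induction_on with
  | _ m IH =>
    intro n r hm cop hmn hr0
    rcases eq_or_lt_of_le (Nat.succ_le_of_lt hm) with h1 | h2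
    · -- m = 1
      have hm1 : m = 1 := h1.symm
      subst hm1
      have hsum : ∀ j ∈ Finset.Icc 1 r,
          ((eucl 1 n (j - 1) / eucl 1 n j : ℕ) : ℚ) * (eucl 1 n j : ℚ)
            * ((eucl 1 n j : ℚ) - 1) = 0 := by
        intro j hj
        simp only [Finset.mem_Icc] at hj
        obtain ⟨j', rfl⟩ : ∃ j', j = j' + 1 := ⟨j - 1, by omega⟩
        rcases eucl_one n j' with h | h <;> rw [h] <;> norm_num
      rw [Finset.sum_eq_zero hsum]
      push_cast
      ring
    · -- 1 < m
      cases r with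
      | zero =>
        have h1 : eucl m n 1 = m := rfl
        have h0 : eucl m n (0 + 1) = eucl m n 1 := rfl
        rw [h0, h1] at hr0
        omega
      | succ r' =>
        have hmlt : n % m < m := Nat.mod_lt n hm
        have hmod : 0 < n % m := by
          rcases Nat.eq_zero_or_pos (n % m) with h | h
          · exfalso
            have hd : m ∣ n := Nat.dvd_of_mod_eq_zero h
            have hm1 : m = 1 := Nat.eq_one_of_dvd_coprimes cop (dvd_refl m) hd
            omega
          · exact h
        have cop' : Nat.Coprime (n % m) m := by
          rw [Nat.Coprime, ← Nat.gcd_rec]; exact cop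
        have hr0' : eucl (n % m) m (r' + 1) = 0 := by
          rw [eucl_shift]; exact hr0
        have IH' := IH (n % m) hmlt m r' hmod cop' hmlt.le hr0'
        rw [← Finset.Ico_add_one_right_eq_Icc, Finset.sum_Ico_eq_sum_range] at IH' ⊢
        have hrange : r' + 1 + 1 - 1 = r' + 1 := by omega
        rw [hrange, Finset.sum_range_succ']
        have hcongr : ∀ i ∈ Finset.range r',
            ((eucl m n (1 + (i + 1) - 1) / eucl m n (1 + (i + 1)) : ℕ) : ℚ)
                * (eucl m n (1 + (i + 1)) : ℚ) * ((eucl m n (1 + (i + 1)) : ℚ) - 1)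
            = ((eucl (n % m) m (1 + i - 1) / eucl (n % m) m (1 + i) : ℕ) : ℚ)
                * (eucl (n % m) m (1 + i) : ℚ) * ((eucl (n % m) m (1 + i) : ℚ) - 1) := by
          intro i _
          have e1 : eucl (n % m) m (1 + i - 1) = eucl m n (1 + (i + 1) - 1) := by
            have h : 1 + i - 1 = i := by omega
            have h' : 1 + (i + 1) - 1 = i + 1 := by omega
            rw [h, h', eucl_shift]
          have e2 : eucl (n % m) m (1 + i) = eucl m n (1 + (i + 1)) := by
            have h : 1 + i = i + 1 := by omega
            have h' : 1 + (i + 1) = i + 1 + 1 := by omega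
            rw [h, h', eucl_shift]
          rw [e1, e2]
        simp only [Nat.add_sub_cancel] at IH'
        rw [Finset.sum_congr rfl hcongr, IH']
        have e0 : eucl m n (1 + 0 - 1) = n := rfl
        have e1 : eucl m n (1 + 0) = m := rfl
        rw [e0, e1]
        have hn : (n : ℚ) = (m : ℚ) * ((n / m : ℕ) : ℚ) + ((n % m : ℕ) : ℚ) := by
          have h := Nat.div_add_mod n m
          have := congrArg (fun k : ℕ => (k : ℚ)) h
          push_cast at this
          linarith
        linear_combination ((1 : ℚ) - (m : ℚ)) * hn

theorem codimension_formula (m n r : ℕ) (hm : 0 < m) (hmn : m < n)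
    (hcop : Nat.Coprime m n)
    (hr : eucl m n r ≠ 0) (hr0 : eucl m n (r + 1) = 0) :
    (n : ℚ) + ((m : ℚ) - 1)
        + (∑ j ∈ Finset.Icc 1 r,
            ((eucl m n (j - 1) / eucl m n j : ℕ) : ℚ) * (eucl m n j : ℚ)
              * ((eucl m n j : ℚ) - 1) / 2)
      = ((n : ℚ) * m + m + n - 1) / 2 := by
  have hk := key m n r hm hcop hmn.le hr0
  rw [← Finset.sum_div, hk]
  ring
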